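/- Consider quadratic costs: each arc a ∈ E has C_a(α) = c_a α² + d_a α with c_a ≥ 0, so C'_a(α) = 2c_a α + d_a. Let F ⊆ E be such that the arcs of F with c_a = 0 contain no undirected cycle, and let b : V → ℝ satisfy Σ_{i∈K} b_i = 0 for every connected component K of the undirected multigraph (V,F). Then there exist x : E → ℝ and π : V → ℝ with x_a = 0 for every a ∉ F, π_{head(a)} − π_{tail(a)} = 2c_a x_a + d_a for every a ∈ F, and ρ_x(i) = b_i for every i ∈ V. -/

import Mathlib

open Finset
open scoped Classical


theorem circulation_eq_zero {V E : Type*} [Fintype V] [Fintype E] [DecidableEq V]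
    (tail head : E → V) (S : Finset E)
    (hacyc : ¬ ∃ k : ℕ, ∃ (e : Fin (k + 1) → E) (s : Fin (k + 1) → Bool),
      (∀ i, e i ∈ S) ∧ Function.Injective e ∧
      Function.Injective (fun i => if s i then tail (e i) else head (e i)) ∧
      ∀ i : Fin (k + 1), (if s i then head (e i) else tail (e i)) =
        (if s (i + 1) then tail (e (i + 1)) else head (e (i + 1))))
    (l : E → ℝ) (hsupp : ∀ a, l a ≠ 0 → a ∈ S)
    (hcons : ∀ i : V, ∑ a ∈ S.filter (fun a => head a = i), l a
      = ∑ a ∈ S.filter (fun a => tail a = i), l a) :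
    ∀ a, l a = 0 := by
  by_contra hne
  push_neg at hne
  obtain ⟨a0, ha0⟩ := hne
  classical
  let good : E × Bool → Prop := fun p => p.1 ∈ S ∧ (if p.2 then 0 < l p.1 else l p.1 < 0)
  let start : E × Bool → V := fun p => if p.2 then tail p.1 else head p.1
  let endv : E × Bool → V := fun p => if p.2 then head p.1 else tail p.1
  have step : ∀ p : E × Bool, good p → ∃ q, good q ∧ start q = endv p := by
    intro p hp
    by_contra h
    push_neg at h
    have hT : ∀ a ∈ S, tail a = endv p → l a ≤ 0 := by
      intro a ha hta
      by_contra hlt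
      push_neg at hlt
      exact h (a, true) ⟨ha, by simpa using hlt⟩ (by simpa [start] using hta)
    have hH : ∀ a ∈ S, head a = endv p → 0 ≤ l a := by
      intro a ha hta
      by_contra hlt
      push_neg at hlt
      exact h (a, false) ⟨ha, by simpa using hlt⟩ (by simpa [start] using hta)
    have key := hcons (endv p)
    have hB : ∑ a ∈ S.filter (fun a => tail a = endv p), l a ≤ 0 :=
      Finset.sum_nonpos (fun a ha => by
        rw [Finset.mem_filter] at ha; exact hT a ha.1 ha.2)
    have hA : 0 < ∑ a ∈ S.filter (fun a => head a = endv p), l a ∨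
        ∑ a ∈ S.filter (fun a => tail a = endv p), l a < 0 := by
      rcases hp with ⟨hpS, hps⟩
      cases hb2 : p.2 with
      | true =>
        left
        have hpl : 0 < l p.1 := by simpa [hb2] using hps
        have hmem : p.1 ∈ S.filter (fun a => head a = endv p) := by
          simp [Finset.mem_filter, hpS, endv, hb2]
        calc (0:ℝ) < l p.1 := hpl
          _ ≤ ∑ a ∈ S.filter (fun a => head a = endv p), l a :=
            Finset.single_le_sum (fun a ha => by
              rw [Finset.mem_filter] at ha; exact hH a ha.1 ha.2) hmem
      | false =>
        right
        have hpl : l p.1 < 0 := by simpa [hb2] using hps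
        have hmem : p.1 ∈ S.filter (fun a => tail a = endv p) := by
          simp [Finset.mem_filter, hpS, endv, hb2]
        have herase : ∑ a ∈ (S.filter (fun a => tail a = endv p)).erase p.1, l a ≤ 0 :=
          Finset.sum_nonpos (fun a ha => by
            have ha' := Finset.mem_of_mem_erase ha
            rw [Finset.mem_filter] at ha'; exact hT a ha'.1 ha'.2)
        have := Finset.add_sum_erase _ l hmem
        linarith
    have hA2 : 0 ≤ ∑ a ∈ S.filter (fun a => head a = endv p), l a :=
      Finset.sum_nonneg (fun a ha => by
        rw [Finset.mem_filter] at ha; exact hH a ha.1 ha.2)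
    rcases hA with hA | hA <;> linarith
  -- initial good pair
  have hg0 : good (a0, if 0 < l a0 then true else false) := by
    constructor
    · exact hsupp a0 ha0
    · by_cases h0 : 0 < l a0
      · simpa [h0] using h0
      · have : l a0 < 0 := lt_of_le_of_ne (not_lt.mp h0) ha0
        simpa [h0] using this
  let f : {p : E × Bool // good p} → {p : E × Bool // good p} := fun p =>
    ⟨(step p.1 p.2).choose, (step p.1 p.2).choose_spec.1⟩
  have hf : ∀ p : {p : E × Bool // good p}, start (f p).1 = endv p.1 := fun p =>
    (step p.1 p.2).choose_spec.2
  let w : ℕ → {p : E × Bool // good p} := fun n => f^[n] ⟨_, hg0⟩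
  have hw : ∀ n, w (n + 1) = f (w n) := fun n => Function.iterate_succ_apply' f n _
  let v : ℕ → V := fun n => start (w n).1
  have hv : ∀ n, v (n + 1) = endv (w n).1 := by
    intro n
    show start (w (n + 1)).1 = endv (w n).1
    rw [hw n]; exact hf (w n)
  -- pigeonhole
  obtain ⟨i1, j1, hne1, heq1⟩ := Finite.exists_ne_map_eq_of_infinite v
  have hP : ∃ n, ∃ i < n, v i = v n := by
    rcases lt_or_gt_of_ne hne1 with h | h
    · exact ⟨j1, i1, h, heq1⟩
    · exact ⟨i1, j1, h, heq1.symm⟩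
  classical
  let j0 := Nat.find hP
  obtain ⟨i0, hi0, hvv⟩ := Nat.find_spec hP
  have hinj : ∀ p q, p < q → q < j0 → v p ≠ v q := by
    intro p q hpq hq hvpq
    exact Nat.find_min hP hq ⟨p, hpq, hvpq⟩
  set k := j0 - i0 - 1 with hkdef
  have hk : i0 + (k + 1) = j0 := by omega
  refine hacyc ⟨k, fun m => (w (i0 + (m : ℕ))).1.1, fun m => (w (i0 + (m : ℕ))).1.2,
    ?_, ?_, ?_, ?_⟩
  · intro m; exact (w (i0 + (m : ℕ))).2.1
  · -- injectivity of arcs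
    intro m m' hee
    simp only at hee
    have hlt : i0 + (m : ℕ) < j0 := by have := m.isLt; omega
    have hlt' : i0 + (m' : ℕ) < j0 := by have := m'.isLt; omega
    have hs : (w (i0 + (m : ℕ))).1.2 = (w (i0 + (m' : ℕ))).1.2 := by
      by_contra hss
      have h1 := (w (i0 + (m : ℕ))).2.2
      have h2 := (w (i0 + (m' : ℕ))).2.2
      rw [hee] at h1
      cases hb1 : (w (i0 + (m : ℕ))).1.2 <;> cases hb2 : (w (i0 + (m' : ℕ))).1.2 <;>
        simp [hb1, hb2] at h1 h2 hss <;> linarith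
    have hveq : v (i0 + (m : ℕ)) = v (i0 + (m' : ℕ)) := by
      show start (w (i0 + (m : ℕ))).1 = start (w (i0 + (m' : ℕ))).1
      simp only [start, hee, hs]
    have : (m : ℕ) = (m' : ℕ) := by
      by_contra hmn
      rcases Nat.lt_or_ge (m : ℕ) (m' : ℕ) with h | h
      · exact hinj _ _ (by omega) hlt' hveq
      · exact hinj _ _ (by omega : i0 + (m' : ℕ) < i0 + (m : ℕ)) hlt hveq.symm
    exact Fin.ext this
  · -- injectivity of start vertices
    intro m m' hee
    simp only at hee
    have hlt : i0 + (m : ℕ) < j0 := by have := m.isLt; omega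
    have hlt' : i0 + (m' : ℕ) < j0 := by have := m'.isLt; omega
    have hveq : v (i0 + (m : ℕ)) = v (i0 + (m' : ℕ)) := hee
    have : (m : ℕ) = (m' : ℕ) := by
      by_contra hmn
      rcases Nat.lt_or_ge (m : ℕ) (m' : ℕ) with h | h
      · exact hinj _ _ (by omega) hlt' hveq
      · exact hinj _ _ (by omega : i0 + (m' : ℕ) < i0 + (m : ℕ)) hlt hveq.symm
    exact Fin.ext this
  · -- adjacency
    intro m
    have hLHS : (if (w (i0 + (m : ℕ))).1.2 then head (w (i0 + (m : ℕ))).1.1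
        else tail (w (i0 + (m : ℕ))).1.1) = v (i0 + (m : ℕ) + 1) := (hv _).symm
    have hRHS : ∀ n : ℕ, (if (w n).1.2 then tail (w n).1.1
        else head (w n).1.1) = v n := fun n => rfl
    rw [hLHS, hRHS]
    by_cases hm : (m : ℕ) = k
    · have : ((m + 1 : Fin (k + 1)) : ℕ) = 0 := by
        have : m = Fin.last k := Fin.ext (by simpa using hm)
        simp [this]
      rw [this, hm]
      have h1 : i0 + k + 1 = j0 := by omega
      rw [h1]
      simpa using hvv.symm
    · have : ((m + 1 : Fin (k + 1)) : ℕ) = (m : ℕ) + 1 := by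
        have hmlt : (m : ℕ) < k := lt_of_le_of_ne (Nat.lt_succ_iff.mp m.isLt) hm
        exact Fin.val_add_one_of_lt (by rw [Fin.lt_iff_val_lt_val, Fin.val_last]; exact hmlt)
      rw [this, ← Nat.add_assoc]


-- Fredholm alternative for symmetric endomorphisms of Euclidean space
theorem symm_mem_range {ι : Type*} [Fintype ι]
    (T : EuclideanSpace ℝ ι →ₗ[ℝ] EuclideanSpace ℝ ι)
    (hsym : ∀ x y, (inner ℝ (T x) y : ℝ) = inner ℝ x (T y))
    (w : EuclideanSpace ℝ ι) (hw : ∀ z, T z = 0 → (inner ℝ w z : ℝ) = 0) :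
    w ∈ LinearMap.range T := by
  have hle : LinearMap.range T ≤ (LinearMap.ker T)ᗮ := by
    rintro _ ⟨x, rfl⟩
    rw [Submodule.mem_orthogonal]
    intro z hz
    rw [LinearMap.mem_ker] at hz
    rw [real_inner_comm, hsym, hz, inner_zero_right]
  have h1 := LinearMap.finrank_range_add_finrank_ker T
  have h2 := Submodule.finrank_add_finrank_orthogonal (𝕜 := ℝ) (LinearMap.ker T)
  have heq : LinearMap.range T = (LinearMap.ker T)ᗮ :=
    Submodule.eq_of_le_of_finrank_eq hle (by omega)
  rw [heq, Submodule.mem_orthogonal]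
  intro z hz
  rw [LinearMap.mem_ker] at hz
  rw [real_inner_comm]
  exact hw z hz

-- sum of b*mu over all vertices vanishes when mu is constant on components
theorem sum_mul_const_on_components {V : Type*} [Fintype V]
    (R : V → V → Prop) (hRsymm : Symmetric R) (b μ : V → ℝ)
    (hb : ∀ v : V, ∑ i ∈ Finset.univ.filter (fun i => Relation.ReflTransGen R v i), b i = 0)
    (hμ : ∀ u v, R u v → μ u = μ v) :
    ∑ i, b i * μ i = 0 := by
  classical
  have hsymmRT : Symmetric (Relation.ReflTransGen R) := fun _ _ h => (@Relation.ReflTransGen.symmetric _ _ ⟨fun _ _ h => hRsymm h⟩).symm _ _ h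
  have hconst : ∀ v i, Relation.ReflTransGen R v i → μ i = μ v := by
    intro v i h
    induction h with
    | refl => rfl
    | tail _ hR ih => rw [← ih]; exact (hμ _ _ hR).symm
  let st : Setoid V := ⟨Relation.ReflTransGen R,
    ⟨fun _ => Relation.ReflTransGen.refl, fun h => hsymmRT h, fun h h' => h.trans h'⟩⟩
  rw [← Finset.sum_fiberwise_of_maps_to (g := Quotient.mk st)
    (fun x _ => Finset.mem_univ (Quotient.mk st x)) (fun i => b i * μ i)]
  apply Finset.sum_eq_zero
  intro q _
  have hfilter : Finset.univ.filter (fun i => Quotient.mk st i = q)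
      = Finset.univ.filter (fun i => Relation.ReflTransGen R q.out i) := by
    apply Finset.filter_congr
    intro i _
    rw [Quotient.mk_eq_iff_out]
    exact ⟨fun h => hsymmRT h, fun h => hsymmRT h⟩
  rw [hfilter]
  have : ∀ i ∈ Finset.univ.filter (fun i => Relation.ReflTransGen R q.out i),
      b i * μ i = b i * μ q.out := by
    intro i hi
    rw [Finset.mem_filter] at hi
    rw [hconst q.out i hi.2]
  rw [Finset.sum_congr rfl this, ← Finset.sum_mul, hb q.out, zero_mul]

noncomputable def stmtT {V E : Type*} [Fintype V] [Fintype E] [DecidableEq V]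
    (tail head : E → V) (c : E → ℝ) (F : Finset E) :
    EuclideanSpace ℝ (E ⊕ V) →ₗ[ℝ] EuclideanSpace ℝ (E ⊕ V) where
  toFun z := WithLp.toLp 2 (Sum.elim
    (fun a => if a ∈ F then z (Sum.inr (head a)) - z (Sum.inr (tail a))
        - 2 * c a * z (Sum.inl a) else z (Sum.inl a))
    (fun i => (∑ a ∈ F.filter (fun a => head a = i), z (Sum.inl a))
      - ∑ a ∈ F.filter (fun a => tail a = i), z (Sum.inl a)))
  map_add' z z' := by
    ext p
    cases p with
    | inl a =>
      by_cases ha : a ∈ F <;>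
        simp only [Sum.elim_inl, PiLp.add_apply, PiLp.toLp_apply, ha, if_true, if_false] <;> ring
    | inr i =>
      simp only [Sum.elim_inr, PiLp.add_apply, PiLp.toLp_apply, Finset.sum_add_distrib]
      ring
  map_smul' r z := by
    ext p
    cases p with
    | inl a =>
      by_cases ha : a ∈ F <;>
        simp only [Sum.elim_inl, PiLp.smul_apply, PiLp.toLp_apply, smul_eq_mul, RingHom.id_apply,
          ha, if_true, if_false] <;> ring
    | inr i =>
      simp only [Sum.elim_inr, PiLp.smul_apply, PiLp.toLp_apply, smul_eq_mul, RingHom.id_apply,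
        Finset.mul_sum, mul_sub]

theorem stmtT_inl {V E : Type*} [Fintype V] [Fintype E] [DecidableEq V]
    (tail head : E → V) (c : E → ℝ) (F : Finset E)
    (z : EuclideanSpace ℝ (E ⊕ V)) (a : E) :
    stmtT tail head c F z (Sum.inl a) = if a ∈ F then z (Sum.inr (head a))
      - z (Sum.inr (tail a)) - 2 * c a * z (Sum.inl a) else z (Sum.inl a) := rfl

theorem stmtT_inr {V E : Type*} [Fintype V] [Fintype E] [DecidableEq V]
    (tail head : E → V) (c : E → ℝ) (F : Finset E)
    (z : EuclideanSpace ℝ (E ⊕ V)) (i : V) :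
    stmtT tail head c F z (Sum.inr i) = (∑ a ∈ F.filter (fun a => head a = i), z (Sum.inl a))
      - ∑ a ∈ F.filter (fun a => tail a = i), z (Sum.inl a) := rfl

/-- Net inflow `ρ_x(i)` of a vector `x : E → ℝ` at a node `i` of a finite directed
multigraph given by `tail, head : E → V`. -/
noncomputable def netInflow {V E : Type*} [Fintype E] [DecidableEq V]
    (tail head : E → V) (x : E → ℝ) (i : V) : ℝ :=
  (∑ a ∈ Finset.univ.filter (fun a => head a = i), x a)
    - (∑ a ∈ Finset.univ.filter (fun a => tail a = i), x a)

/-- solvability of the Trial system for quadratic costs: let every arc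
carry the cost `C_a(α) = c_a α² + d_a α` with `c_a ≥ 0`.  Suppose the arcs of `F` with
`c_a = 0` contain no undirected cycle, and `b` sums to `0` on every connected component
of the undirected multigraph `(V,F)` (the component of `v` being the set of nodes
reachable from `v` along arcs of `F` in either direction).  Then there are `x : E → ℝ`
and potentials `π : V → ℝ` with `x = 0` outside `F`,
`π_{head a} − π_{tail a} = 2 c_a x_a + d_a` on `F`, and `ρ_x = b`. -/
theorem stmt_11 {V E : Type*} [Fintype V] [Fintype E] [DecidableEq V]
    (tail head : E → V) (c d : E → ℝ) (hc : ∀ a, 0 ≤ c a)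
    (F : Finset E)
    (hacyc : ¬ ∃ k : ℕ, ∃ (e : Fin (k + 1) → E) (s : Fin (k + 1) → Bool),
      (∀ i, e i ∈ F ∧ c (e i) = 0) ∧
      Function.Injective e ∧
      Function.Injective (fun i => if s i then tail (e i) else head (e i)) ∧
      ∀ i : Fin (k + 1), (if s i then head (e i) else tail (e i)) =
        (if s (i + 1) then tail (e (i + 1)) else head (e (i + 1))))
    (b : V → ℝ)
    (hb : ∀ v : V, ∑ i ∈ Finset.univ.filter (fun i =>
        Relation.ReflTransGen (fun u w => ∃ a ∈ F,
          (tail a = u ∧ head a = w) ∨ (tail a = w ∧ head a = u)) v i), b i = 0) :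
    ∃ (x : E → ℝ) (π : V → ℝ),
      (∀ a, a ∉ F → x a = 0) ∧
      (∀ a ∈ F, π (head a) - π (tail a) = 2 * c a * x a + d a) ∧
      (∀ i, netInflow tail head x i = b i) := by
  classical
  set T := stmtT tail head c F with hT
  -- inner product expansion
  have hinner : ∀ u y : EuclideanSpace ℝ (E ⊕ V),
      (inner ℝ u y : ℝ) = (∑ a : E, u (Sum.inl a) * y (Sum.inl a))
        + ∑ i : V, u (Sum.inr i) * y (Sum.inr i) := by
    intro u y
    rw [PiLp.inner_apply, Fintype.sum_sum_type]
    simp [RCLike.inner_apply, starRingEnd_apply, star_trivial, mul_comm]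
  -- swap of double sums
  have hswap : ∀ (f : E → V) (g : E → ℝ) (h : V → ℝ),
      ∑ i : V, (∑ a ∈ F.filter (fun a => f a = i), g a) * h i = ∑ a ∈ F, g a * h (f a) := by
    intro f g h
    rw [← Finset.sum_fiberwise_of_maps_to (g := f) (fun a _ => Finset.mem_univ (f a))
      (fun a => g a * h (f a))]
    apply Finset.sum_congr rfl
    intro i _
    rw [Finset.sum_mul]
    apply Finset.sum_congr rfl
    intro a ha
    rw [(Finset.mem_filter.mp ha).2]
  have hFuniv : Finset.univ.filter (fun a => a ∈ F) = F := by
    ext a; simp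
  -- expansion of the quadratic form
  have hTinner : ∀ z z' : EuclideanSpace ℝ (E ⊕ V),
      (inner ℝ (T z) z' : ℝ) =
        (∑ a ∈ F, ((z (Sum.inr (head a)) - z (Sum.inr (tail a)) - 2 * c a * z (Sum.inl a))
            * z' (Sum.inl a)
          + z (Sum.inl a) * (z' (Sum.inr (head a)) - z' (Sum.inr (tail a)))))
        + ∑ a ∈ Finset.univ.filter (fun a => a ∉ F), z (Sum.inl a) * z' (Sum.inl a) := by
    intro z z'
    rw [hinner]
    have h1 : ∑ a : E, T z (Sum.inl a) * z' (Sum.inl a)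
        = (∑ a ∈ F, (z (Sum.inr (head a)) - z (Sum.inr (tail a)) - 2 * c a * z (Sum.inl a))
            * z' (Sum.inl a))
          + ∑ a ∈ Finset.univ.filter (fun a => a ∉ F), z (Sum.inl a) * z' (Sum.inl a) := by
      rw [← Finset.sum_filter_add_sum_filter_not Finset.univ (fun a => a ∈ F)]
      congr 1
      · apply Finset.sum_congr hFuniv
        intro a ha
        rw [hT, stmtT_inl, if_pos ha]
      · apply Finset.sum_congr rfl
        intro a ha
        rw [Finset.mem_filter] at ha
        rw [hT, stmtT_inl, if_neg ha.2]
    have h2 : ∑ i : V, T z (Sum.inr i) * z' (Sum.inr i)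
        = ∑ a ∈ F, z (Sum.inl a) * (z' (Sum.inr (head a)) - z' (Sum.inr (tail a))) := by
      have e0 : ∀ i : V, T z (Sum.inr i) * z' (Sum.inr i)
          = (∑ a ∈ F.filter (fun a => head a = i), z (Sum.inl a)) * z' (Sum.inr i)
            - (∑ a ∈ F.filter (fun a => tail a = i), z (Sum.inl a)) * z' (Sum.inr i) := by
        intro i
        rw [hT, stmtT_inr]; ring
      rw [Finset.sum_congr rfl (fun i _ => e0 i), Finset.sum_sub_distrib,
        hswap head (fun a => z (Sum.inl a)) (fun i => z' (Sum.inr i)),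
        hswap tail (fun a => z (Sum.inl a)) (fun i => z' (Sum.inr i)),
        ← Finset.sum_sub_distrib]
      apply Finset.sum_congr rfl
      intro a _
      ring
    rw [h1, h2, Finset.sum_add_distrib]
    ring
  -- symmetry
  have hsym : ∀ z z', (inner ℝ (T z) z' : ℝ) = inner ℝ z (T z') := by
    intro z z'
    rw [hTinner z z', real_inner_comm, hTinner z' z]
    congr 1
    · apply Finset.sum_congr rfl; intro a _; ring
    · apply Finset.sum_congr rfl; intro a _; ring
  -- right-hand side
  set w : EuclideanSpace ℝ (E ⊕ V) :=
    WithLp.toLp 2 (Sum.elim (fun a => if a ∈ F then d a else 0) b) with hwdef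
  have hwl : ∀ a : E, w (Sum.inl a) = if a ∈ F then d a else 0 := fun a => rfl
  have hwr : ∀ i : V, w (Sum.inr i) = b i := fun i => rfl
  -- orthogonality to the kernel
  have hker : ∀ z, T z = 0 → (inner ℝ w z : ℝ) = 0 := by
    intro z hz
    have hz1 : ∀ a, a ∉ F → z (Sum.inl a) = 0 := by
      intro a ha
      have h := congrFun (congrArg WithLp.ofLp hz) (Sum.inl a)
      rw [hT, stmtT_inl, if_neg ha] at h
      simpa using h
    have hz2 : ∀ a ∈ F, z (Sum.inr (head a)) - z (Sum.inr (tail a))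
        = 2 * c a * z (Sum.inl a) := by
      intro a ha
      have h := congrFun (congrArg WithLp.ofLp hz) (Sum.inl a)
      rw [hT, stmtT_inl, if_pos ha] at h
      have h0 : z (Sum.inr (head a)) - z (Sum.inr (tail a)) - 2 * c a * z (Sum.inl a) = 0 := by
        simpa using h
      linarith
    have hz3 : ∀ i, ∑ a ∈ F.filter (fun a => head a = i), z (Sum.inl a)
        = ∑ a ∈ F.filter (fun a => tail a = i), z (Sum.inl a) := by
      intro i
      have h := congrFun (congrArg WithLp.ofLp hz) (Sum.inr i)
      rw [hT, stmtT_inr] at h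
      have h0 : (∑ a ∈ F.filter (fun a => head a = i), z (Sum.inl a))
          - ∑ a ∈ F.filter (fun a => tail a = i), z (Sum.inl a) = 0 := by simpa using h
      linarith
    -- quadratic identity
    have hq1 : ∑ a ∈ F, z (Sum.inl a) * (z (Sum.inr (head a)) - z (Sum.inr (tail a))) = 0 := by
      have e1 : ∑ a ∈ F, z (Sum.inl a) * (z (Sum.inr (head a)) - z (Sum.inr (tail a)))
          = (∑ a ∈ F, z (Sum.inl a) * z (Sum.inr (head a)))
            - ∑ a ∈ F, z (Sum.inl a) * z (Sum.inr (tail a)) := by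
        rw [← Finset.sum_sub_distrib]
        exact Finset.sum_congr rfl (fun a _ => by ring)
      rw [e1, ← hswap head (fun a => z (Sum.inl a)) (fun i => z (Sum.inr i)),
        ← hswap tail (fun a => z (Sum.inl a)) (fun i => z (Sum.inr i)),
        ← Finset.sum_sub_distrib]
      apply Finset.sum_eq_zero
      intro i _
      rw [hz3 i]; ring
    have hq2 : ∑ a ∈ F, 2 * c a * z (Sum.inl a) ^ 2 = 0 := by
      rw [← hq1]
      apply Finset.sum_congr rfl
      intro a ha
      rw [mul_comm, hz2 a ha]; ring
    have hzero : ∀ a ∈ F, c a * z (Sum.inl a) ^ 2 = 0 := by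
      have hnn : ∀ a ∈ F, 0 ≤ 2 * c a * z (Sum.inl a) ^ 2 := by
        intro a _
        have := hc a
        positivity
      have h := (Finset.sum_eq_zero_iff_of_nonneg hnn).mp hq2
      intro a ha
      have := h a ha
      linarith
    -- the support of z on arcs is an acyclic circulation, hence zero
    set S : Finset E := F.filter (fun a => c a = 0) with hSdef
    have hsupp : ∀ a, z (Sum.inl a) ≠ 0 → a ∈ S := by
      intro a hla
      have haF : a ∈ F := by
        by_contra haF
        exact hla (hz1 a haF)
      rw [hSdef, Finset.mem_filter]
      refine ⟨haF, ?_⟩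
      rcases mul_eq_zero.mp (hzero a haF) with h | h
      · exact h
      · exact absurd ((pow_eq_zero_iff (by norm_num : (2:ℕ) ≠ 0)).mp h) hla
    have hsub : ∀ (f : E → V) (i : V),
        ∑ a ∈ S.filter (fun a => f a = i), z (Sum.inl a)
          = ∑ a ∈ F.filter (fun a => f a = i), z (Sum.inl a) := by
      intro f i
      apply Finset.sum_subset
      · intro a ha
        rw [Finset.mem_filter] at ha ⊢
        exact ⟨(Finset.mem_filter.mp ha.1).1, ha.2⟩
      · intro a ha hna
        by_contra hla
        apply hna
        rw [Finset.mem_filter] at ha ⊢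
        exact ⟨hsupp a hla, ha.2⟩
    have hcons : ∀ i, ∑ a ∈ S.filter (fun a => head a = i), z (Sum.inl a)
        = ∑ a ∈ S.filter (fun a => tail a = i), z (Sum.inl a) := by
      intro i
      rw [hsub head i, hsub tail i]
      exact hz3 i
    have hacycS : ¬ ∃ k : ℕ, ∃ (e : Fin (k + 1) → E) (s : Fin (k + 1) → Bool),
        (∀ i, e i ∈ S) ∧ Function.Injective e ∧
        Function.Injective (fun i => if s i then tail (e i) else head (e i)) ∧
        ∀ i : Fin (k + 1), (if s i then head (e i) else tail (e i)) =
          (if s (i + 1) then tail (e (i + 1)) else head (e (i + 1))) := by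
      rintro ⟨k, e, s, hmem, h2, h3, h4⟩
      exact hacyc ⟨k, e, s, fun i => Finset.mem_filter.mp (hmem i), h2, h3, h4⟩
    have hl0 : ∀ a, z (Sum.inl a) = 0 :=
      circulation_eq_zero tail head S hacycS (fun a => z (Sum.inl a)) hsupp hcons
    -- potentials constant on components
    have hmu : ∀ u v : V, (∃ a ∈ F, (tail a = u ∧ head a = v) ∨ (tail a = v ∧ head a = u)) →
        z (Sum.inr u) = z (Sum.inr v) := by
      rintro u v ⟨a, haF, h | h⟩
      · have h2 := hz2 a haF
        rw [hl0 a, mul_zero] at h2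
        rw [← h.1, ← h.2]
        linarith
      · have h2 := hz2 a haF
        rw [hl0 a, mul_zero] at h2
        rw [← h.1, ← h.2]
        linarith
    have hRsymm : Symmetric (fun u w : V => ∃ a ∈ F,
        (tail a = u ∧ head a = w) ∨ (tail a = w ∧ head a = u)) := by
      rintro u v ⟨a, ha, h | h⟩
      · exact ⟨a, ha, Or.inr h⟩
      · exact ⟨a, ha, Or.inl h⟩
    rw [hinner]
    have hA : ∑ a : E, w (Sum.inl a) * z (Sum.inl a) = 0 :=
      Finset.sum_eq_zero (fun a _ => by rw [hl0 a, mul_zero])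
    have hB : ∑ i : V, w (Sum.inr i) * z (Sum.inr i) = 0 := by
      have : ∀ i : V, w (Sum.inr i) * z (Sum.inr i) = b i * z (Sum.inr i) := fun i => by
        rw [hwr]
      rw [Finset.sum_congr rfl (fun i _ => this i)]
      exact sum_mul_const_on_components _ hRsymm b _ hb hmu
    rw [hA, hB, add_zero]
  -- solve the system
  obtain ⟨sol, hsol⟩ := symm_mem_range T hsym w hker
  refine ⟨fun a => if a ∈ F then sol (Sum.inl a) else 0, fun i => sol (Sum.inr i), ?_, ?_, ?_⟩
  · intro a ha; simp [ha]
  · intro a ha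
    have h := congrFun (congrArg WithLp.ofLp hsol) (Sum.inl a)
    rw [hT, stmtT_inl, if_pos ha, hwl, if_pos ha] at h
    simp only [if_pos ha]
    linarith
  · intro i
    have h := congrFun (congrArg WithLp.ofLp hsol) (Sum.inr i)
    rw [hT, stmtT_inr, hwr] at h
    have hsum : ∀ f : E → V,
        ∑ a ∈ Finset.univ.filter (fun a => f a = i), (if a ∈ F then sol (Sum.inl a) else 0)
          = ∑ a ∈ F.filter (fun a => f a = i), sol (Sum.inl a) := by
      intro f
      rw [← Finset.sum_filter]
      congr 1
      ext a
      simp only [Finset.mem_filter, Finset.mem_univ, true_and]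
      tauto
    show (∑ a ∈ Finset.univ.filter (fun a => head a = i),
        (if a ∈ F then sol (Sum.inl a) else 0))
      - (∑ a ∈ Finset.univ.filter (fun a => tail a = i),
        (if a ∈ F then sol (Sum.inl a) else 0)) = b i
    rw [hsum head, hsum tail]
    exact h
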